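/- arXiv:math/0105057 — 2 statements merged into one kernel-verified Lean document; each statement's English description precedes it below -/
import Mathlib

section
/- Let u be harmonic on an open set U ⊆ ℝ², let v(x,y) = a·(x,y) + ε be an affine function with a ∈ ℝ², ε > 0, positive on U. For each fixed (x,y) the map s ↦ u(x,y) + s·v(x,y) is invertible in s, with inverse t(x,y;z) = (z - u(x,y))/v(x,y). Then the vector field φ(x,y,z) = (2∇u + 2((z-u)/v)·a, |∇u + ((z-u)/v)·a|²) is divergence free on U × ℝ. -/
/-- The slope field `∇u + ((z-u)/v)·a` where `v(x,y) = a·(x,y) + ε`. -/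
noncomputable def slopeField (u : ℝ × ℝ → ℝ) (a : ℝ × ℝ) (ε : ℝ)
    (p : ℝ × ℝ) (z : ℝ) : ℝ × ℝ :=
  (deriv (fun x => u (x, p.2)) p.1 + (z - u p) / (a.1 * p.1 + a.2 * p.2 + ε) * a.1,
   deriv (fun y => u (p.1, y)) p.2 + (z - u p) / (a.1 * p.1 + a.2 * p.2 + ε) * a.2)


private lemma aux_deriv_diff (f : ℝ → ℝ) (x : ℝ) (hf : ContDiffAt ℝ 2 f x) :
    DifferentiableAt ℝ (deriv f) x := by
  obtain ⟨s, hs, hfs⟩ := hf.contDiffOn le_rfl (by simp)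
  obtain ⟨t, hts, ht, hxt⟩ := mem_nhds_iff.mp hs
  have h1 : ContDiffOn ℝ 1 (deriv f) t := by
    refine (hfs.mono hts).deriv_of_isOpen ht ?_
    norm_num
  exact (h1.differentiableOn one_ne_zero).differentiableAt (ht.mem_nhds hxt)

/-- For `u` harmonic on `U` and `v(x,y) = a·(x,y) + ε > 0` on `U`, the field
`φ(x,y,z) = (2∇u + 2((z-u)/v)a, |∇u + ((z-u)/v)a|²)` is divergence free on `U × ℝ`. -/
theorem stmt_1 (U : Set (ℝ × ℝ)) (hU : IsOpen U) (u : ℝ × ℝ → ℝ) (a : ℝ × ℝ)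
    (ε : ℝ) (hε : 0 < ε)
    (hu : ContDiffOn ℝ 2 u U)
    (hharm : ∀ p ∈ U,
      deriv (fun x => deriv (fun x' => u (x', p.2)) x) p.1
        + deriv (fun y => deriv (fun y' => u (p.1, y')) y) p.2 = 0)
    (hv : ∀ p ∈ U, 0 < a.1 * p.1 + a.2 * p.2 + ε) :
    ∀ p ∈ U, ∀ z : ℝ,
      deriv (fun x => 2 * (slopeField u a ε (x, p.2) z).1) p.1
        + deriv (fun y => 2 * (slopeField u a ε (p.1, y) z).2) p.2
        + deriv (fun z' => (slopeField u a ε p z').1 ^ 2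
            + (slopeField u a ε p z').2 ^ 2) z = 0 := by
  intro p hp z
  have hVpos : 0 < a.1 * p.1 + a.2 * p.2 + ε := hv p hp
  set V : ℝ := a.1 * p.1 + a.2 * p.2 + ε with hV
  have hVne : V ≠ 0 := ne_of_gt hVpos
  -- contDiffAt of u at p
  have huc : ContDiffAt ℝ 2 u p := hu.contDiffAt (hU.mem_nhds hp)
  -- slices
  have hf1 : ContDiffAt ℝ 2 (fun x => u (x, p.2)) p.1 := by
    have : ContDiffAt ℝ 2 (fun x : ℝ => (x, p.2)) p.1 := contDiffAt_id.prodMk contDiffAt_const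
    exact huc.comp p.1 this
  have hf2 : ContDiffAt ℝ 2 (fun y => u (p.1, y)) p.2 := by
    have : ContDiffAt ℝ 2 (fun y : ℝ => (p.1, y)) p.2 := contDiffAt_const.prodMk contDiffAt_id
    exact huc.comp p.2 this
  have hDx : DifferentiableAt ℝ (fun x => u (x, p.2)) p.1 :=
    hf1.differentiableAt (by norm_num)
  have hDy : DifferentiableAt ℝ (fun y => u (p.1, y)) p.2 :=
    hf2.differentiableAt (by norm_num)
  have hf1' : DifferentiableAt ℝ (deriv (fun x => u (x, p.2))) p.1 :=
    aux_deriv_diff _ _ hf1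
  have hf2' : DifferentiableAt ℝ (deriv (fun y => u (p.1, y))) p.2 :=
    aux_deriv_diff _ _ hf2
  set A : ℝ := deriv (fun x => deriv (fun x' => u (x', p.2)) x) p.1 with hA
  set B : ℝ := deriv (fun y => deriv (fun y' => u (p.1, y')) y) p.2 with hB
  set Dx : ℝ := deriv (fun x => u (x, p.2)) p.1 with hDx'
  set Dy : ℝ := deriv (fun y => u (p.1, y)) p.2 with hDy'
  set up : ℝ := u p with hup
  have hpp : p = (p.1, p.2) := rfl
  -- x-direction derivative
  have hx : HasDerivAt (fun x => 2 * (slopeField u a ε (x, p.2) z).1)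
      (2 * (A + ((-Dx) * V - (z - up) * a.1) / V ^ 2 * a.1)) p.1 := by
    have h1 : HasDerivAt (fun x => deriv (fun x' => u (x', p.2)) x) A p.1 :=
      hf1'.hasDerivAt
    have h2 : HasDerivAt (fun x => u (x, p.2)) Dx p.1 := hDx.hasDerivAt
    have h3 : HasDerivAt (fun x => z - u (x, p.2)) (-Dx) p.1 := by
      simpa using (show HasDerivAt (fun x => z - u (x, p.2)) (0 - Dx) p.1 from (hasDerivAt_const p.1 z).sub h2)
    have h4 : HasDerivAt (fun x => a.1 * x + a.2 * p.2 + ε) a.1 p.1 := by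
      simpa using (((hasDerivAt_id p.1).const_mul a.1).add_const (a.2 * p.2)).add_const ε
    have h5 : HasDerivAt (fun x => (z - u (x, p.2)) / (a.1 * x + a.2 * p.2 + ε))
        (((-Dx) * V - (z - up) * a.1) / V ^ 2) p.1 := by
      have : HasDerivAt (fun x => (z - u (x, p.2)) / (a.1 * x + a.2 * p.2 + ε)) _ p.1 := h3.div h4 hVne
      simpa [hup, hV] using this
    have h6 := (h1.add (h5.mul_const a.1)).const_mul 2
    simpa [slopeField, mul_add] using h6
  -- y-direction derivative
  have hy : HasDerivAt (fun y => 2 * (slopeField u a ε (p.1, y) z).2)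
      (2 * (B + ((-Dy) * V - (z - up) * a.2) / V ^ 2 * a.2)) p.2 := by
    have h1 : HasDerivAt (fun y => deriv (fun y' => u (p.1, y')) y) B p.2 :=
      hf2'.hasDerivAt
    have h2 : HasDerivAt (fun y => u (p.1, y)) Dy p.2 := hDy.hasDerivAt
    have h3 : HasDerivAt (fun y => z - u (p.1, y)) (-Dy) p.2 := by
      simpa using (show HasDerivAt (fun y => z - u (p.1, y)) (0 - Dy) p.2 from (hasDerivAt_const p.2 z).sub h2)
    have h4 : HasDerivAt (fun y => a.1 * p.1 + a.2 * y + ε) a.2 p.2 := by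
      simpa using (((hasDerivAt_id p.2).const_mul a.2).const_add (a.1 * p.1)).add_const ε
    have h5 : HasDerivAt (fun y => (z - u (p.1, y)) / (a.1 * p.1 + a.2 * y + ε))
        (((-Dy) * V - (z - up) * a.2) / V ^ 2) p.2 := by
      have : HasDerivAt (fun y => (z - u (p.1, y)) / (a.1 * p.1 + a.2 * y + ε)) _ p.2 := h3.div h4 hVne
      simpa [hup, hV] using this
    have h6 := (h1.add (h5.mul_const a.2)).const_mul 2
    simpa [slopeField, mul_add] using h6
  -- z-direction derivative
  have hz : HasDerivAt (fun z' => (slopeField u a ε p z').1 ^ 2 + (slopeField u a ε p z').2 ^ 2)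
      (2 * (Dx + (z - up) / V * a.1) * (a.1 / V) + 2 * (Dy + (z - up) / V * a.2) * (a.2 / V)) z := by
    have hw : HasDerivAt (fun z' : ℝ => (z' - up) / V) (1 / V) z := by
      simpa using ((hasDerivAt_id z).sub_const up).div_const V
    have h1 : HasDerivAt (fun z' : ℝ => Dx + (z' - up) / V * a.1) (1 / V * a.1) z :=
      (hw.mul_const a.1).const_add Dx
    have h2 : HasDerivAt (fun z' : ℝ => Dy + (z' - up) / V * a.2) (1 / V * a.2) z :=
      (hw.mul_const a.2).const_add Dy
    have h5 : HasDerivAt (fun z' : ℝ => (Dx + (z' - up) / V * a.1) ^ 2 + (Dy + (z' - up) / V * a.2) ^ 2) _ z :=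
      (h1.pow 2).add (h2.pow 2)
    have heq : (fun z' => (slopeField u a ε p z').1 ^ 2 + (slopeField u a ε p z').2 ^ 2)
        = (fun z' : ℝ => (Dx + (z' - up) / V * a.1) ^ 2 + (Dy + (z' - up) / V * a.2) ^ 2) := by
      funext z'
      simp [slopeField, hDx', hDy', hup, hV]
    rw [heq]
    convert h5 using 1
    push_cast
    simp only [show (2:ℕ) - 1 = 1 from rfl, pow_one]
    ring
  rw [hx.deriv, hy.deriv, hz.deriv]
  have hAB : A + B = 0 := hharm p hp
  clear hV hVpos
  clear_value V
  field_simp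
  linear_combination (2 * V ^ 2) * hAB
end

section
/- Consider the 3×3 symmetric matrix M with M₁₁ = 3/4 - √3/(2ε), M₁₂ = -2a, M₁₃ = 2b, M₂₂ = M₃₃ = -√3/ε, M₂₃ = 0, with a, b ∈ ℝ fixed. Then det M = -(3√3/(2ε³))(1 - (√3/2)ε) + (4√3/ε)(a² + b²), and for ε sufficiently small (depending on a, b), M is negative definite. -/
open Matrix

private lemma quad_aux (a b d v0 v1 v2 : ℝ) (hd : 0 < d)
    (hA : (3 / 4 - d / 2) * d + 4 * (a ^ 2 + b ^ 2) + d ≤ 0)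
    (hB : 8 * (a ^ 2 + b ^ 2) + 1 ≤ d)
    (hne : v0 ≠ 0 ∨ v1 ≠ 0 ∨ v2 ≠ 0) :
    v0 * ((3 / 4 - d / 2) * v0 + -2 * a * v1 + 2 * b * v2)
      + v1 * (-2 * a * v0 + -d * v1 + 0 * v2)
      + v2 * (2 * b * v0 + 0 * v1 + -d * v2) < 0 := by
  have hAv0 : ((3 / 4 - d / 2) * d + 4 * (a ^ 2 + b ^ 2) + d) * v0 ^ 2 ≤ 0 :=
    mul_nonpos_of_nonpos_of_nonneg hA (sq_nonneg _)
  have hBv0 : (8 * (a ^ 2 + b ^ 2) + 1) * v0 ^ 2 ≤ d * v0 ^ 2 :=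
    mul_le_mul_of_nonneg_right hB (sq_nonneg _)
  rcases hne with h0 | h1 | h2
  · have h0' : 0 < v0 ^ 2 := by positivity
    nlinarith [hAv0, mul_pos hd h0', sq_nonneg (d * v1 + 2 * a * v0),
      sq_nonneg (d * v2 - 2 * b * v0), hd]
  · have h1' : 0 < v1 ^ 2 := by positivity
    nlinarith [hAv0, hBv0, hd, sq_nonneg (d * v1 + 2 * a * v0),
      sq_nonneg (d * v2 - 2 * b * v0), sq_nonneg (d * v1 + 4 * a * v0),
      mul_pos (mul_pos hd hd) h1', sq_nonneg v0, sq_nonneg (b * v0)]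
  · have h2' : 0 < v2 ^ 2 := by positivity
    nlinarith [hAv0, hBv0, hd, sq_nonneg (d * v1 + 2 * a * v0),
      sq_nonneg (d * v2 - 2 * b * v0), sq_nonneg (d * v2 - 4 * b * v0),
      mul_pos (mul_pos hd hd) h2', sq_nonneg v0, sq_nonneg (a * v0)]

/-- For fixed `a, b ∈ ℝ` and `ε > 0` small enough, the symmetric matrix
`M = [[3/4 - √3/(2ε), -2a, 2b], [-2a, -√3/ε, 0], [2b, 0, -√3/ε]]` satisfies
`det M = -(3√3/(2ε³))(1 - (√3/2)ε) + (4√3/ε)(a² + b²)` and is negative definite. -/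
theorem stmt_16 (a b : ℝ) :
    ∃ ε₀ > (0 : ℝ), ∀ ε : ℝ, 0 < ε → ε < ε₀ →
      ((!![3 / 4 - Real.sqrt 3 / (2 * ε), -2 * a, 2 * b;
           -2 * a, -Real.sqrt 3 / ε, 0;
           2 * b, 0, -Real.sqrt 3 / ε] : Matrix (Fin 3) (Fin 3) ℝ).det
          = -(3 * Real.sqrt 3 / (2 * ε ^ 3)) * (1 - Real.sqrt 3 / 2 * ε)
            + 4 * Real.sqrt 3 / ε * (a ^ 2 + b ^ 2))
      ∧ ∀ v : Fin 3 → ℝ, v ≠ 0 →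
          v ⬝ᵥ ((!![3 / 4 - Real.sqrt 3 / (2 * ε), -2 * a, 2 * b;
           -2 * a, -Real.sqrt 3 / ε, 0;
           2 * b, 0, -Real.sqrt 3 / ε] : Matrix (Fin 3) (Fin 3) ℝ).mulVec v) < 0 := by
  have hKpos : (0:ℝ) < 10 + 10 * (a ^ 2 + b ^ 2) := by positivity
  refine ⟨1 / (10 + 10 * (a ^ 2 + b ^ 2)), by positivity, fun ε hε hεlt => ?_⟩
  have hε1 : ε * (10 + 10 * (a ^ 2 + b ^ 2)) < 1 := by
    rw [lt_div_iff₀ hKpos] at hεlt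
    exact hεlt
  have hs3 : Real.sqrt 3 ^ 2 = 3 := Real.sq_sqrt (by norm_num)
  have hs1 : 1 < Real.sqrt 3 := by nlinarith [Real.sqrt_nonneg 3]
  have hs2 : Real.sqrt 3 < 2 := by nlinarith [Real.sqrt_nonneg 3]
  have hK : (0:ℝ) ≤ a ^ 2 + b ^ 2 := by positivity
  have he1 : ε < 1 / 10 := by nlinarith
  have he2 : (a ^ 2 + b ^ 2) * ε < 1 / 10 := by nlinarith
  have hd : 0 < Real.sqrt 3 / ε := div_pos (by linarith) hε
  have hA : (3 / 4 - (Real.sqrt 3 / ε) / 2) * (Real.sqrt 3 / ε) + 4 * (a ^ 2 + b ^ 2)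
      + Real.sqrt 3 / ε ≤ 0 := by
    have hrw : (3 / 4 - (Real.sqrt 3 / ε) / 2) * (Real.sqrt 3 / ε) + 4 * (a ^ 2 + b ^ 2)
        + Real.sqrt 3 / ε
        = ((3 / 4) * Real.sqrt 3 * ε - 3 / 2 + 4 * (a ^ 2 + b ^ 2) * ε ^ 2
            + Real.sqrt 3 * ε) / ε ^ 2 := by
      field_simp
      linear_combination (-4) * hs3
    rw [hrw]
    apply div_nonpos_of_nonpos_of_nonneg _ (by positivity)
    nlinarith [mul_pos hε hε, sq_nonneg ε]
  have hB : 8 * (a ^ 2 + b ^ 2) + 1 ≤ Real.sqrt 3 / ε := by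
    rw [le_div_iff₀ hε]
    nlinarith
  constructor
  · rw [Matrix.det_fin_three]
    simp only [Matrix.cons_val_zero, Matrix.cons_val_one, Matrix.head_cons,
      Matrix.cons_val_two, Matrix.tail_cons, Matrix.of_apply, Matrix.cons_val']
    field_simp
    linear_combination (-8 * Real.sqrt 3) * hs3
  · intro v hv
    simp only [Matrix.mulVec, dotProduct, Fin.sum_univ_three,
      Matrix.cons_val_zero, Matrix.cons_val_one, Matrix.head_cons,
      Matrix.cons_val_two, Matrix.tail_cons, Matrix.of_apply, Matrix.cons_val']
    have e1 : (3:ℝ) / 4 - Real.sqrt 3 / (2 * ε) = 3 / 4 - (Real.sqrt 3 / ε) / 2 := by ring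
    have e2 : -Real.sqrt 3 / ε = -(Real.sqrt 3 / ε) := by ring
    rw [e1, e2]
    have hne : v 0 ≠ 0 ∨ v 1 ≠ 0 ∨ v 2 ≠ 0 := by
      by_contra h
      push_neg at h
      apply hv
      funext i
      fin_cases i <;> simp [h.1, h.2.1, h.2.2]
    exact quad_aux a b (Real.sqrt 3 / ε) (v 0) (v 1) (v 2) hd hA hB hne
end
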